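/- (Corollary 1) Suppose r_n ≠ 0 and x_n ≠ 0 for all n = 1,…,N, so that the pseudo-optimal subsampling probabilities π_n^{posp} := |r_n|·‖M⁻¹x_n‖ / ∑_{m=1}^N |r_m|·‖M⁻¹x_m‖ are strictly positive, and let π_n^{uni} := 1/N. Then tr(V(π^{uni})) ≥ tr(V(π^{posp})). -/

import Mathlib

open scoped BigOperators

/-- Euclidean norm of a vector in `ℝ^p`. -/
noncomputable def euclidNorm {p : ℕ} (v : Fin p → ℝ) : ℝ := Real.sqrt (∑ j, v j ^ 2)

/-- `V₀(π) = (1/(CN²))[∑_n π_n⁻¹ r_n² x_n x_nᵀ + c cᵀ + ∑_n r_n (c x_nᵀ + x_n cᵀ)]`. -/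
noncomputable def V0 {N p : ℕ} (C : ℝ) (x : Fin N → Fin p → ℝ) (r : Fin N → ℝ)
    (c : Fin p → ℝ) (π : Fin N → ℝ) : Matrix (Fin p) (Fin p) ℝ :=
  (1 / (C * (N : ℝ) ^ 2)) •
    (∑ n, ((π n)⁻¹ * r n ^ 2) • Matrix.vecMulVec (x n) (x n) + Matrix.vecMulVec c c +
      ∑ n, r n • (Matrix.vecMulVec c (x n) + Matrix.vecMulVec (x n) c))

/-- `V(π) = M⁻¹ V₀(π) M⁻¹`. -/
noncomputable def Vmat {N p : ℕ} (C : ℝ) (x : Fin N → Fin p → ℝ) (r : Fin N → ℝ)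
    (c : Fin p → ℝ) (M : Matrix (Fin p) (Fin p) ℝ) (π : Fin N → ℝ) :
    Matrix (Fin p) (Fin p) ℝ :=
  M⁻¹ * V0 C x r c π * M⁻¹

lemma trace_sandwich {p : ℕ} (A : Matrix (Fin p) (Fin p) ℝ) (hA : A.IsHermitian)
    (u : Fin p → ℝ) :
    Matrix.trace (A * Matrix.vecMulVec u u * A) = ∑ j, (A.mulVec u j) ^ 2 := by
  have hsym : ∀ i j, A i j = A j i := by
    intro i j
    conv_lhs => rw [← hA]
    simp [Matrix.conjTranspose_apply]
  have key : A * Matrix.vecMulVec u u * A =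
      Matrix.vecMulVec (A.mulVec u) (A.mulVec u) := by
    ext i j
    simp only [Matrix.mul_apply, Matrix.vecMulVec_apply, Matrix.mulVec,
      dotProduct, Finset.sum_mul, Finset.mul_sum]
    refine Finset.sum_congr rfl fun k _ => Finset.sum_congr rfl fun l _ => ?_
    rw [hsym k j]
    ring
  rw [key]
  simp [Matrix.trace, Matrix.diag, Matrix.vecMulVec_apply, sq]

lemma trace_V {N p : ℕ} (C : ℝ) (x : Fin N → Fin p → ℝ) (r : Fin N → ℝ)
    (c : Fin p → ℝ) (M : Matrix (Fin p) (Fin p) ℝ) (hM : M.PosDef) (π : Fin N → ℝ) :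
    Matrix.trace (Vmat C x r c M π) =
      (1 / (C * (N : ℝ) ^ 2)) *
        ((∑ n, (π n)⁻¹ * r n ^ 2 * ∑ j, (M⁻¹.mulVec (x n) j) ^ 2) +
          Matrix.trace (M⁻¹ * (Matrix.vecMulVec c c +
            ∑ n, r n • (Matrix.vecMulVec c (x n) + Matrix.vecMulVec (x n) c)) * M⁻¹)) := by
  have hA : (M⁻¹).IsHermitian := hM.isHermitian.inv
  rw [Vmat, V0, add_assoc]
  rw [Matrix.mul_smul, Matrix.smul_mul, Matrix.trace_smul, smul_eq_mul]
  congr 1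
  rw [Matrix.mul_add, Matrix.add_mul, Matrix.trace_add]
  congr 1
  rw [Finset.mul_sum, Finset.sum_mul, Matrix.trace_sum]
  refine Finset.sum_congr rfl fun n _ => ?_
  rw [Matrix.mul_smul, Matrix.smul_mul, Matrix.trace_smul, smul_eq_mul,
    trace_sandwich _ hA]

/-- (Corollary 1) If `r_n ≠ 0` and `x_n ≠ 0` for all `n`, so that the pseudo-optimal
subsampling probabilities `π_n^{posp} = |r_n|·‖M⁻¹x_n‖ / ∑_m |r_m|·‖M⁻¹x_m‖` are strictly
positive, and `π_n^{uni} = 1/N`, then `tr(V(π^{uni})) ≥ tr(V(π^{posp}))`. -/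
theorem trace_V_uniform_ge_trace_V_posp
    {N p : ℕ} (hN : 0 < N) (C : ℝ) (hC : 0 < C)
    (x : Fin N → Fin p → ℝ) (r : Fin N → ℝ) (c : Fin p → ℝ)
    (M : Matrix (Fin p) (Fin p) ℝ) (hM : M.PosDef)
    (hr : ∀ n, r n ≠ 0) (hx : ∀ n, x n ≠ 0) :
    Matrix.trace (Vmat C x r c M
        (fun n => |r n| * euclidNorm (M⁻¹.mulVec (x n)) /
          ∑ m, |r m| * euclidNorm (M⁻¹.mulVec (x m)))) ≤
      Matrix.trace (Vmat C x r c M (fun _ => 1 / (N : ℝ))) := by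
  set a : Fin N → ℝ := fun n => |r n| * euclidNorm (M⁻¹.mulVec (x n)) with ha
  -- M⁻¹ x n ≠ 0
  have hMdet : IsUnit M.det := isUnit_iff_ne_zero.mpr hM.det_pos.ne'
  have hMx : ∀ n, M⁻¹.mulVec (x n) ≠ 0 := by
    intro n h
    apply hx n
    have : M.mulVec (M⁻¹.mulVec (x n)) = x n := by
      rw [Matrix.mulVec_mulVec, Matrix.mul_nonsing_inv _ hMdet, Matrix.one_mulVec]
    rw [h, Matrix.mulVec_zero] at this
    exact this.symm
  have hsumpos : ∀ n, 0 < ∑ j, (M⁻¹.mulVec (x n) j) ^ 2 := by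
    intro n
    obtain ⟨j, hj⟩ := Function.ne_iff.mp (hMx n)
    simp only [Pi.zero_apply] at hj
    exact Finset.sum_pos' (fun i _ => sq_nonneg _)
      ⟨j, Finset.mem_univ j, lt_of_le_of_ne (sq_nonneg _) (Ne.symm (pow_ne_zero _ hj))⟩
  have henorm : ∀ n, euclidNorm (M⁻¹.mulVec (x n)) ^ 2 = ∑ j, (M⁻¹.mulVec (x n) j) ^ 2 := by
    intro n
    exact Real.sq_sqrt (Finset.sum_nonneg fun i _ => sq_nonneg _)
  have hapos : ∀ n, 0 < a n := by
    intro n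
    apply mul_pos (abs_pos.mpr (hr n))
    exact Real.sqrt_pos.mpr (hsumpos n)
  have hasq : ∀ n, a n ^ 2 = r n ^ 2 * ∑ j, (M⁻¹.mulVec (x n) j) ^ 2 := by
    intro n
    rw [ha]
    rw [mul_pow, sq_abs, henorm]
  set S : ℝ := ∑ m, a m with hS
  have hSpos : 0 < S := Finset.sum_pos (fun n _ => hapos n) ⟨⟨0, hN⟩, Finset.mem_univ _⟩
  rw [trace_V C x r c M hM, trace_V C x r c M hM]
  have hpos : (0:ℝ) < 1 / (C * (N : ℝ) ^ 2) := by positivity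
  apply mul_le_mul_of_nonneg_left _ hpos.le
  apply add_le_add_left
  -- posp side equals S^2
  have hL : ∑ n, (a n / S)⁻¹ * r n ^ 2 * ∑ j, (M⁻¹.mulVec (x n) j) ^ 2 = S ^ 2 := by
    have : ∀ n ∈ Finset.univ, (a n / S)⁻¹ * r n ^ 2 * (∑ j, (M⁻¹.mulVec (x n) j) ^ 2)
        = S * a n := by
      intro n _
      rw [mul_assoc, ← hasq n]
      field_simp [(hapos n).ne']
    rw [Finset.sum_congr rfl this, ← Finset.mul_sum, ← hS, sq]
  have hR : ∑ n, ((1 : ℝ) / N)⁻¹ * r n ^ 2 * ∑ j, (M⁻¹.mulVec (x n) j) ^ 2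
      = (N : ℝ) * ∑ n, a n ^ 2 := by
    rw [Finset.mul_sum]
    refine Finset.sum_congr rfl fun n _ => ?_
    rw [hasq n, one_div, inv_inv, mul_assoc]
  rw [hL, hR]
  -- Cauchy–Schwarz
  have := Finset.sum_mul_sq_le_sq_mul_sq Finset.univ a (fun _ => (1:ℝ))
  simp only [mul_one, one_pow, Finset.sum_const, Finset.card_univ, Fintype.card_fin,
    nsmul_eq_mul] at this
  calc S ^ 2 ≤ (∑ n, a n ^ 2) * N := this
    _ = (N : ℝ) * ∑ n, a n ^ 2 := mul_comm _ _
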